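/- For all n ≥ 1, the summatory function of the periodicity function of the Thue–Morse word satisfies (3/8)(n−1)² + n/2 ≤ P_t(n) ≤ (3/4)n² + n + 1. -/

import Mathlib

open Finset Filter Asymptotics

/-- `n` is a local period of the infinite word `w` at position `i`:
`n ≥ 1` and either (`n ≤ i` and `w_{i+k} = w_{i-n+k}` for all `k < n`)
or (`n > i` and `w_k = w_{n+k}` for all `k < i`). -/
def IsLocalPeriodAt {α : Type*} (w : ℕ → α) (i n : ℕ) : Prop :=
  1 ≤ n ∧ ((n ≤ i ∧ ∀ k < n, w (i + k) = w (i - n + k)) ∨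
           (i < n ∧ ∀ k < i, w k = w (n + k)))

/-- The periodicity function `p_w(i)`: the least local period of `w` at `i`. -/
noncomputable def perFn {α : Type*} (w : ℕ → α) (i : ℕ) : ℕ :=
  sInf {n | IsLocalPeriodAt w i n}

/-- The summatory function `P_w(n) = ∑_{j<n} p_w(j)`. -/
noncomputable def sumFn {α : Type*} (w : ℕ → α) (n : ℕ) : ℕ :=
  ∑ j ∈ Finset.range n, perFn w j

/-- The periodic complexity `h_w(n) = P_w(n)/n`. -/
noncomputable def perComplexity {α : Type*} (w : ℕ → α) (n : ℕ) : ℝ :=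
  (sumFn w n : ℝ) / n

/-- The Thue–Morse word: `t_i = 0` iff the number of 1's in the binary
representation of `i` is even. -/
def tm (i : ℕ) : ℕ :=
  if Even ((Nat.digits 2 i).count 1) then 0 else 1

lemma tm_le_one (i : ℕ) : tm i ≤ 1 := by
  unfold tm; split <;> simp

lemma tm_two_mul (i : ℕ) : tm (2 * i) = tm i := by
  rcases Nat.eq_zero_or_pos i with h | h
  · subst h; rfl
  · unfold tm
    rw [Nat.digits_def' (by norm_num : 1 < 2) (by omega)]
    simp [Nat.mul_div_cancel_left, Nat.mul_mod_right, List.count_cons]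

lemma tm_odd (i : ℕ) : tm (2 * i + 1) = 1 - tm i := by
  unfold tm
  rw [Nat.digits_def' (by norm_num : 1 < 2) (by omega)]
  have h1 : (2 * i + 1) % 2 = 1 := by omega
  have h2 : (2 * i + 1) / 2 = i := by omega
  rw [h1, h2]
  by_cases h : Even ((Nat.digits 2 i).count 1) <;>
    simp [List.count_cons, Nat.even_add_one, h]

lemma tm_zero : tm 0 = 0 := by simp [tm]
lemma tm_one : tm 1 = 1 := by have := tm_odd 0; simpa [tm_zero] using this
lemma tm_two : tm 2 = 1 := by have := tm_two_mul 1; simpa [tm_one] using this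
lemma tm_three : tm 3 = 0 := by have := tm_odd 1; simpa [tm_one] using this
lemma tm_four : tm 4 = 1 := by have := tm_two_mul 2; simpa [tm_two] using this

lemma tm_E (i : ℕ) : tm (2 * i) ≠ tm (2 * i + 1) := by
  have h1 := tm_two_mul i
  have h2 := tm_odd i
  have := tm_le_one i
  omega

lemma tm_trans {a b c : ℕ} (h1 : tm a ≠ tm b) (h2 : tm c ≠ tm b) : tm a = tm c := by
  have := tm_le_one a; have := tm_le_one b; have := tm_le_one c; omega

/-- Thue–Morse has no "overlap": no period-n repetition of length 2n+1. -/
lemma no_overlap : ∀ n, 0 < n → ∀ a, ¬ (∀ k ≤ n, tm (a + k) = tm (a + k + n)) := by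
  intro n
  induction n using Nat.strong_induction_on with
  | _ n IH =>
  intro hn a H
  rcases Nat.even_or_odd n with ⟨s, hs⟩ | ⟨d, hd⟩
  · -- n = 2s even: halve
    have hs1 : 0 < s := by omega
    apply IH s (by omega) hs1 (a / 2)
    intro k hk
    rcases Nat.even_or_odd a with ⟨b, hb⟩ | ⟨b, hb⟩
    · have h := H (2 * k) (by omega)
      rw [show a + 2 * k + n = 2 * (b + k + s) by omega,
          show a + 2 * k = 2 * (b + k) by omega,
          tm_two_mul, tm_two_mul] at h
      rw [show a / 2 + k = b + k by omega]
      exact h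
    · have h := H (2 * k) (by omega)
      rw [show a + 2 * k + n = 2 * (b + k + s) + 1 by omega,
          show a + 2 * k = 2 * (b + k) + 1 by omega,
          tm_odd, tm_odd] at h
      rw [show a / 2 + k = b + k by omega]
      have := tm_le_one (b + k); have := tm_le_one (b + k + s); omega
  · -- n = 2d+1 odd
    have alt : ∀ k < n, tm (a + k) ≠ tm (a + k + 1) := by
      intro k hk
      rcases Nat.even_or_odd (a + k) with ⟨b, hb⟩ | ⟨b, hb⟩
      · rw [show a + k + 1 = 2 * b + 1 by omega, show a + k = 2 * b by omega]
        exact tm_E b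
      · -- a+k odd ⇒ a+k+n even
        have h1 := H k (le_of_lt hk)
        have h2 := H (k + 1) (by omega)
        have hE : tm (a + k + n) ≠ tm (a + k + n + 1) := by
          rw [show a + k + n + 1 = 2 * (b + d + 1) + 1 by omega,
              show a + k + n = 2 * (b + d + 1) by omega]
          exact tm_E (b + d + 1)
        rw [show a + (k + 1) + n = a + k + n + 1 by omega,
            show a + (k + 1) = a + k + 1 by omega] at h2
        rw [h1, h2]; exact hE
    have chain : ∀ k, 2 * k ≤ n → tm (a + 2 * k) = tm a := by
      intro k
      induction k with
      | zero => simp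
      | succ k ih =>
        intro h
        have e1 := alt (2 * k) (by omega)
        have e2 : tm (a + (2 * k + 1)) ≠ tm (a + (2 * k + 1) + 1) := alt (2 * k + 1) (by omega)
        have e3 := ih (by omega)
        rw [show a + (2 * k + 1) = a + 2 * k + 1 by omega,
            show a + 2 * k + 1 + 1 = a + 2 * (k + 1) by omega] at e2
        rw [← e3]; exact (tm_trans e1 e2.symm).symm
    have h1 := chain d (by omega)
    have h0 := H 0 (by omega)
    have hE : tm (a + 2 * d) ≠ tm (a + 2 * d + 1) := alt (2 * d) (by omega)
    rw [show a + 0 + n = a + 2 * d + 1 by omega, show a + 0 = a by omega] at h0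
    rw [h1, h0] at hE
    exact hE rfl

/-- If the prefix of length `L ≥ 1` of Thue–Morse occurs at position `n ≥ 1`,
then `2n ≥ 3L`. -/
lemma prefix_occ : ∀ L, 0 < L → ∀ n, 0 < n → (∀ k < L, tm k = tm (n + k)) → 3 * L ≤ 2 * n := by
  intro L
  induction L using Nat.strong_induction_on with
  | _ L IH =>
  intro hL n hn H
  have hn1 : n ≠ 1 := by
    intro h
    have h0 := H 0 hL
    rw [h, tm_zero] at h0
    simp [tm_one] at h0
  rcases Nat.even_or_odd n with ⟨s, hsn⟩ | ⟨d, hd⟩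
  · -- n = 2s even
    have hs1 : 0 < s := by omega
    rcases Nat.lt_or_ge L 2 with h2 | h2
    · omega
    · set L' := (L + 1) / 2 with hL'
      have hL1 : 0 < L' ∧ L' < L ∧ 2 * L' ≤ L + 1 ∧ L ≤ 2 * L' := by omega
      have H' : ∀ k < L', tm k = tm (s + k) := by
        intro k hk
        have h := H (2 * k) (by omega)
        rw [show n + 2 * k = 2 * (s + k) by omega, tm_two_mul, tm_two_mul] at h
        exact h
      have := IH L' hL1.2.1 hL1.1 s hs1 H'
      omega
  · -- n odd
    rcases Nat.lt_or_ge L 3 with h3 | h3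
    · -- L ≤ 2, n odd ≠ 1 ⇒ n ≥ 3
      omega
    · exfalso
      have h1 := H 1 (by omega)
      have h2 := H 2 (by omega)
      have hE : tm (n + 1) ≠ tm (n + 2) := by
        rw [show n + 2 = 2 * (d + 1) + 1 by omega, show n + 1 = 2 * (d + 1) by omega]
        exact tm_E (d + 1)
      rw [← h1, ← h2, tm_one, tm_two] at hE
      exact hE rfl

/-- The prefix of length `2^(k+1)` of Thue–Morse occurs at position `3·2^k`. -/
lemma prefix_at : ∀ k, ∀ i < 2 ^ (k + 1), tm i = tm (3 * 2 ^ k + i) := by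
  intro k
  induction k with
  | zero =>
    intro i hi
    interval_cases i
    · rw [tm_zero]; rw [show 3 * 2 ^ 0 + 0 = 3 by norm_num, tm_three]
    · rw [tm_one]; rw [show 3 * 2 ^ 0 + 1 = 4 by norm_num, tm_four]
  | succ k IH =>
    intro i hi
    have hp : (2 : ℕ) ^ (k + 1 + 1) = 2 * 2 ^ (k + 1) := by ring
    rcases Nat.even_or_odd i with ⟨j, hj⟩ | ⟨j, hj⟩
    · have hj2 : j < 2 ^ (k + 1) := by omega
      rw [show i = 2 * j by omega, show 3 * 2 ^ (k + 1) + 2 * j = 2 * (3 * 2 ^ k + j) by ring,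
        tm_two_mul, tm_two_mul]
      exact IH j hj2
    · have hj2 : j < 2 ^ (k + 1) := by omega
      rw [show i = 2 * j + 1 by omega,
        show 3 * 2 ^ (k + 1) + (2 * j + 1) = 2 * (3 * 2 ^ k + j) + 1 by ring,
        tm_odd, tm_odd, IH j hj2]



/-- Witness of a small local period at even positions. -/
lemma even_mem (m : ℕ) : ∃ n ≤ 2, IsLocalPeriodAt tm (2 * m) n := by
  rcases Nat.eq_zero_or_pos m with h | h
  · exact ⟨1, by norm_num, le_refl 1, Or.inr ⟨by omega, by intro k hk; omega⟩⟩
  by_cases hc : tm (2 * m - 1) = tm (2 * m)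
  · refine ⟨1, by norm_num, le_refl 1, Or.inl ⟨by omega, ?_⟩⟩
    intro k hk
    rw [show k = 0 by omega, Nat.add_zero, Nat.add_zero]
    exact hc.symm
  · refine ⟨2, le_refl 2, by norm_num, Or.inl ⟨by omega, ?_⟩⟩
    -- tm (m-1) = tm m from hc
    have e1 : tm (2 * m - 1) = 1 - tm (m - 1) := by
      rw [show 2 * m - 1 = 2 * (m - 1) + 1 by omega, tm_odd]
    have e2 : tm (2 * m) = tm m := tm_two_mul m
    have hm : tm (m - 1) = tm m := by
      have := tm_le_one (m - 1); have := tm_le_one m; omega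
    intro k hk
    interval_cases k
    · rw [Nat.add_zero, show 2 * m - 2 + 0 = 2 * (m - 1) by omega, tm_two_mul, tm_two_mul]
      exact hm.symm
    · rw [show 2 * m + 1 = 2 * m + 1 from rfl, show 2 * m - 2 + 1 = 2 * (m - 1) + 1 by omega,
        tm_odd, tm_odd, hm]

lemma odd_mem (m : ℕ) :
    ∃ n, n ≤ 3 * (2 * m + 1) ∧ IsLocalPeriodAt tm (2 * m + 1) n := by
  set j := 2 * m + 1 with hj
  set k := Nat.log 2 j with hk
  have h1 : 2 ^ k ≤ j := Nat.pow_log_le_self 2 (by omega)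
  have h2 : j < 2 ^ (k + 1) := Nat.lt_pow_succ_log_self (by norm_num) j
  have hp : (2 : ℕ) ^ (k + 1) = 2 * 2 ^ k := by ring
  refine ⟨3 * 2 ^ k, by omega, ?_, Or.inr ⟨by omega, ?_⟩⟩
  · have : 0 < (2:ℕ) ^ k := by positivity
    omega
  intro i hi
  exact prefix_at k i (by omega)

lemma per_nonempty (j : ℕ) : {n | IsLocalPeriodAt tm j n}.Nonempty := by
  rcases Nat.even_or_odd j with ⟨m, hm⟩ | ⟨m, hm⟩
  · obtain ⟨n, _, h⟩ := even_mem m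
    exact ⟨n, by rwa [show j = 2 * m by omega]⟩
  · obtain ⟨n, _, h⟩ := odd_mem m
    exact ⟨n, by rwa [show j = 2 * m + 1 by omega]⟩

lemma per_mem (j : ℕ) : IsLocalPeriodAt tm j (perFn tm j) :=
  Nat.sInf_mem (per_nonempty j)

lemma per_pos (j : ℕ) : 0 < perFn tm j := (per_mem j).1

lemma per_even_le (m : ℕ) : perFn tm (2 * m) ≤ 2 := by
  obtain ⟨n, hn2, h⟩ := even_mem m
  exact le_trans (Nat.sInf_le h) hn2

lemma per_odd_le (m : ℕ) : perFn tm (2 * m + 1) ≤ 3 * (2 * m + 1) := by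
  obtain ⟨n, hn, h⟩ := odd_mem m
  exact le_trans (Nat.sInf_le h) hn

lemma per_odd_ge (m : ℕ) : 3 * (2 * m + 1) + 1 ≤ 2 * perFn tm (2 * m + 1) := by
  set j := 2 * m + 1 with hj
  obtain ⟨h1, hcase⟩ := per_mem j
  set n := perFn tm j with hn
  rcases hcase with ⟨hle, hsq⟩ | ⟨hlt, hpre⟩
  · -- square branch: impossible at odd positions
    exfalso
    have C : ∀ k < n, tm (j - n + k) = tm (j - n + k + n) := by
      intro k hk
      have h := hsq k hk
      rw [show j + k = j - n + k + n by omega] at h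
      exact h.symm
    rcases Nat.even_or_odd n with ⟨s, hs⟩ | ⟨d, hd⟩
    · -- n = 2s even: produce an overlap of period s at (m - s)
      have hs1 : 0 < s := by omega
      have hsm : s ≤ m := by omega
      apply no_overlap s hs1 (m - s)
      intro k hk
      rcases Nat.lt_or_ge k s with hks | hks
      · -- use odd-indexed constraint 2k
        have h := C (2 * k) (by omega)
        rw [show j - n + 2 * k = 2 * (m - s + k) + 1 by omega,
            show 2 * (m - s + k) + 1 + n = 2 * (m - s + k + s) + 1 by omega,
            tm_odd, tm_odd] at h
        have := tm_le_one (m - s + k); have := tm_le_one (m - s + k + s); omega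
      · -- k = s: use even-indexed constraint 2k - 1
        have hks' : k = s := by omega
        have h := C (2 * k - 1) (by omega)
        rw [show j - n + (2 * k - 1) = 2 * (m - s + k) by omega,
            show 2 * (m - s + k) + n = 2 * (m - s + k + s) by omega,
            tm_two_mul, tm_two_mul] at h
        exact h
    · -- n = 2d+1 odd
      set a := j - n with ha
      have alt : ∀ k, k + 1 < n → tm (a + k) ≠ tm (a + k + 1) := by
        intro k hk
        rcases Nat.even_or_odd (a + k) with ⟨b, hb⟩ | ⟨b, hb⟩
        · rw [show a + k + 1 = 2 * b + 1 by omega, show a + k = 2 * b by omega]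
          exact tm_E b
        · have hc1 := C k (by omega)
          have hc2 := C (k + 1) (by omega)
          have hE : tm (a + k + n) ≠ tm (a + k + n + 1) := by
            rw [show a + k + n + 1 = 2 * (b + d + 1) + 1 by omega,
                show a + k + n = 2 * (b + d + 1) by omega]
            exact tm_E (b + d + 1)
          rw [show a + (k + 1) + n = a + k + n + 1 by omega,
              show a + (k + 1) = a + k + 1 by omega] at hc2
          rw [hc1, hc2]; exact hE
      have chain : ∀ k, 2 * k ≤ n - 1 → tm (a + 2 * k) = tm a := by
        intro k
        induction k with
        | zero => simp
        | succ k ih =>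
          intro h
          have e1 := alt (2 * k) (by omega)
          have e2 : tm (a + (2 * k + 1)) ≠ tm (a + (2 * k + 1) + 1) := alt (2 * k + 1) (by omega)
          have e3 := ih (by omega)
          rw [show a + (2 * k + 1) = a + 2 * k + 1 by omega,
              show a + 2 * k + 1 + 1 = a + 2 * (k + 1) by omega] at e2
          rw [← e3]; exact (tm_trans e1 e2.symm).symm
      have hch := chain d (by omega)
      have h0 := C 0 (by omega)
      rw [show a + 0 + n = a + 2 * d + 1 by omega, show a + 0 = a by omega] at h0
      -- a + 2d = j - 1 = 2m even
      have hE : tm (a + 2 * d) ≠ tm (a + 2 * d + 1) := by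
        rw [show a + 2 * d + 1 = 2 * m + 1 by omega, show a + 2 * d = 2 * m by omega]
        exact tm_E m
      rw [hch, h0] at hE
      exact hE rfl
  · -- prefix branch
    have := prefix_occ j (by omega) n (by omega) hpre
    omega


lemma sumFn_succ (w : ℕ → ℕ) (n : ℕ) : sumFn w (n + 1) = sumFn w n + perFn w n := by
  unfold sumFn; rw [Finset.sum_range_succ]

lemma sum_bounds (m : ℕ) :
    (sumFn tm (2 * m) ≤ 3 * m ^ 2 + 2 * m ∧ 3 * m ^ 2 + 3 * m ≤ 2 * sumFn tm (2 * m)) ∧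
    (sumFn tm (2 * m + 1) ≤ 3 * m ^ 2 + 2 * m + 2 ∧
      3 * m ^ 2 + 3 * m + 2 ≤ 2 * sumFn tm (2 * m + 1)) := by
  induction m with
  | zero =>
    have h0 : sumFn tm 0 = 0 := by simp [sumFn]
    have h1 := sumFn_succ tm 0
    have hp2 := per_even_le 0
    have hpp := per_pos 0
    rw [show 2 * 0 = 0 by norm_num] at *
    constructor
    · constructor <;> omega
    · rw [show (0:ℕ) + 1 = 0 + 1 from rfl]
      constructor <;> omega
  | succ m ih =>
    obtain ⟨⟨u0, l0⟩, u1, l1⟩ := ih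
    have e2 : 2 * (m + 1) = (2 * m + 1) + 1 := by ring
    have h2 := sumFn_succ tm (2 * m + 1)
    have h3 := sumFn_succ tm (2 * (m + 1))
    have hou := per_odd_le m
    have hol := per_odd_ge m
    have heu := per_even_le (m + 1)
    have hep := per_pos (2 * (m + 1))
    rw [e2] at h3 heu hep ⊢
    constructor
    · constructor <;> nlinarith
    · constructor <;> nlinarith

theorem tm_sumFn_bounds (n : ℕ) (hn : 1 ≤ n) :
    (3 / 8 : ℝ) * ((n : ℝ) - 1) ^ 2 + (n : ℝ) / 2 ≤ (sumFn tm n : ℝ) ∧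
      (sumFn tm n : ℝ) ≤ (3 / 4 : ℝ) * (n : ℝ) ^ 2 + (n : ℝ) + 1 := by
  rcases Nat.even_or_odd n with ⟨m, hm⟩ | ⟨m, hm⟩
  · have hm' : n = 2 * m := by omega
    obtain ⟨⟨hu, hl⟩, -⟩ := sum_bounds m
    rw [hm'] at *
    have hu' : (sumFn tm (2 * m) : ℝ) ≤ 3 * (m : ℝ) ^ 2 + 2 * m := by exact_mod_cast hu
    have hl' : 3 * (m : ℝ) ^ 2 + 3 * m ≤ 2 * (sumFn tm (2 * m) : ℝ) := by exact_mod_cast hl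
    have hm1 : (1 : ℝ) ≤ (m : ℝ) := by exact_mod_cast (by omega : 1 ≤ m)
    constructor <;> [skip; skip] <;> push_cast <;> nlinarith
  · have hm' : n = 2 * m + 1 := hm
    obtain ⟨-, hu, hl⟩ := sum_bounds m
    rw [hm'] at *
    have hu' : (sumFn tm (2 * m + 1) : ℝ) ≤ 3 * (m : ℝ) ^ 2 + 2 * m + 2 := by exact_mod_cast hu
    have hl' : 3 * (m : ℝ) ^ 2 + 3 * m + 2 ≤ 2 * (sumFn tm (2 * m + 1) : ℝ) := by
      exact_mod_cast hl
    have hm1 : (0 : ℝ) ≤ (m : ℝ) := by positivity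
    constructor <;> push_cast <;> nlinarith
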